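/- For any graph G = (V,E), p : V → ℤ_{>0}, and m ≥ 1, every feasible solution (x̃, ỹ) of the linear relaxation of the assignment formulation satisfies ỹ ≥ (1/m)·Σ_{v∈V} p(v). Consequently, the optimal value of this LP relaxation (for m ≥ 2) is exactly (1/m)·Σ_{v∈V} p(v). -/

import Mathlib

/-- Every feasible solution of the LP relaxation of the assignment formulation
of PMC satisfies `ỹ ≥ (Σ p)/m`, and for `m ≥ 2` this bound is attained: the
optimal LP value is exactly `(Σ p)/m`. -/
theorem stmt4 {V : Type*} [Fintype V] (G : SimpleGraph V) (p : V → ℤ)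
    (hp : ∀ v, 0 < p v) (m : ℕ) (hm : 2 ≤ m) :
    IsLeast {y : ℚ | 0 ≤ y ∧ ∃ x : V → Fin m → ℚ,
        (∀ v k, 0 ≤ x v k ∧ x v k ≤ 1) ∧
        (∀ v, 1 ≤ ∑ k, x v k) ∧
        (∀ u v k, G.Adj u v → x u k + x v k ≤ 1) ∧
        (∀ k, ∑ v, (p v : ℚ) * x v k ≤ y)}
      ((∑ v, (p v : ℚ)) / m) := by
  have hm0 : (0:ℚ) < m := by positivity
  have hm1 : (1:ℚ) ≤ m := by exact_mod_cast Nat.one_le_of_lt hm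
  have hm2 : (2:ℚ) ≤ m := by exact_mod_cast hm
  have hpsum : 0 ≤ ∑ v, (p v : ℚ) :=
    Finset.sum_nonneg fun v _ => by exact_mod_cast (hp v).le
  constructor
  · refine ⟨div_nonneg hpsum hm0.le, fun _ _ => 1 / m, ?_, ?_, ?_, ?_⟩
    · intro v k
      constructor
      · positivity
      · rw [div_le_one hm0]; exact hm1
    · intro v
      rw [Finset.sum_const, Finset.card_univ, Fintype.card_fin, nsmul_eq_mul,
        mul_one_div, div_self hm0.ne']
    · intro u v k _
      rw [← add_div, div_le_one hm0]; linarith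
    · intro k
      simp only [mul_one_div]
      rw [← Finset.sum_div]
  · rintro y ⟨hy0, x, hx01, hx1, -, hxy⟩
    rw [div_le_iff₀ hm0]
    have h1 : ∑ v, (p v : ℚ) ≤ ∑ v, ∑ k, (p v : ℚ) * x v k := by
      apply Finset.sum_le_sum
      intro v _
      rw [← Finset.mul_sum]
      calc (p v : ℚ) = (p v : ℚ) * 1 := (mul_one _).symm
        _ ≤ (p v : ℚ) * ∑ k, x v k :=
          mul_le_mul_of_nonneg_left (hx1 v) (by exact_mod_cast (hp v).le)
    have h2 : ∑ v, ∑ k, (p v : ℚ) * x v k ≤ y * m := by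
      rw [Finset.sum_comm]
      calc ∑ k, ∑ v, (p v : ℚ) * x v k ≤ ∑ _k : Fin m, y :=
          Finset.sum_le_sum fun k _ => hxy k
        _ = y * m := by
          rw [Finset.sum_const, Finset.card_univ, Fintype.card_fin, nsmul_eq_mul,
            mul_comm]
    exact h1.trans h2
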